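/- Let G : D ⥤ C be a functor admitting a left adjoint, and let K : C ⥤ C' be a conservative functor. If the composite functor K ∘ G : D ⥤ C' is monadic, then G is monadic. -/

import Mathlib

/-!
STATEMENT 0 (1-categorical `Monadic_Cancel`):
Let `G : D ⥤ C` admit a left adjoint and let `K : C ⥤ C'` be conservative.
If `G ⋙ K` is monadic, then `G` is monadic.
-/

open CategoryTheory

universe v u₁ u₂ u₃

theorem monadic_cancel {D : Type u₁} {C : Type u₂} {C' : Type u₃}
    [Category.{v} D] [Category.{v} C] [Category.{v} C']
    (G : D ⥤ C) (K : C ⥤ C')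
    [G.IsRightAdjoint] [K.ReflectsIsomorphisms]
    [MonadicRightAdjoint (G ⋙ K)] :
    Nonempty (MonadicRightAdjoint G) := by
  classical
  -- `G ⋙ K` reflects isomorphisms, since it is (up to iso) comparison ⋙ forget
  haveI hGK : (G ⋙ K).ReflectsIsomorphisms := by
    have e := Monad.comparisonForget (monadicAdjunction (G ⋙ K))
    constructor
    intro X Y f hf
    haveI : IsIso ((Monad.comparison (monadicAdjunction (G ⋙ K)) ⋙
        (monadicAdjunction (G ⋙ K)).toMonad.forget).map f) :=
      (NatIso.isIso_map_iff e f).mpr hf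
    exact isIso_of_reflects_iso f (Monad.comparison (monadicAdjunction (G ⋙ K)) ⋙
      (monadicAdjunction (G ⋙ K)).toMonad.forget)
  haveI hG : G.ReflectsIsomorphisms := reflectsIsomorphisms_of_comp G K
  haveI h1 : Monad.HasCoequalizerOfIsSplitPair G := by
    constructor
    intro A B f g hfg
    haveI : (G ⋙ K).IsSplitPair f g :=
      show HasSplitCoequalizer (K.map (G.map f)) (K.map (G.map g)) from inferInstance
    haveI : CreatesColimit (Limits.parallelPair f g) (G ⋙ K) :=
      Monad.createsGSplitCoequalizersOfMonadic (G ⋙ K) f g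
    haveI : HasSplitCoequalizer
        ((Limits.parallelPair f g ⋙ (G ⋙ K)).map Limits.WalkingParallelPairHom.left)
        ((Limits.parallelPair f g ⋙ (G ⋙ K)).map Limits.WalkingParallelPairHom.right) :=
      ‹(G ⋙ K).IsSplitPair f g›
    haveI : Limits.HasColimit (Limits.parallelPair f g ⋙ (G ⋙ K)) := by
      apply Limits.hasColimit_of_iso (Limits.diagramIsoParallelPair _)
    exact hasColimit_of_created (Limits.parallelPair f g) (G ⋙ K)
  haveI h2 : Monad.PreservesColimitOfIsSplitPair G := by
    constructor
    intro A B f g hfg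
    haveI : (G ⋙ K).IsSplitPair f g :=
      show HasSplitCoequalizer (K.map (G.map f)) (K.map (G.map g)) from inferInstance
    haveI : CreatesColimit (Limits.parallelPair f g) (G ⋙ K) :=
      Monad.createsGSplitCoequalizersOfMonadic (G ⋙ K) f g
    haveI : HasSplitCoequalizer
        ((Limits.parallelPair f g ⋙ (G ⋙ K)).map Limits.WalkingParallelPairHom.left)
        ((Limits.parallelPair f g ⋙ (G ⋙ K)).map Limits.WalkingParallelPairHom.right) :=
      ‹(G ⋙ K).IsSplitPair f g›
    haveI : Limits.HasColimit (Limits.parallelPair f g ⋙ (G ⋙ K)) := by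
      apply Limits.hasColimit_of_iso (Limits.diagramIsoParallelPair _)
    haveI : Limits.PreservesColimit (Limits.parallelPair f g) (G ⋙ K) := inferInstance
    -- now reflect along K
    haveI : HasSplitCoequalizer
        ((Limits.parallelPair f g ⋙ G).map Limits.WalkingParallelPairHom.left)
        ((Limits.parallelPair f g ⋙ G).map Limits.WalkingParallelPairHom.right) := hfg
    haveI : Limits.HasColimit (Limits.parallelPair f g ⋙ G) := by
      apply Limits.hasColimit_of_iso (Limits.diagramIsoParallelPair _)
    haveI : Limits.PreservesColimit (Limits.parallelPair f g ⋙ G) K := by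
      apply Limits.preservesColimit_of_iso_diagram K
        (Limits.diagramIsoParallelPair (Limits.parallelPair f g ⋙ G)).symm
    haveI : Limits.ReflectsColimit (Limits.parallelPair f g ⋙ G) K :=
      Limits.reflectsColimit_of_reflectsIsomorphisms _ _
    exact Limits.preservesColimit_of_reflects_of_preserves G K
  exact ⟨Monad.monadicOfHasPreservesGSplitCoequalizersOfReflectsIsomorphisms
    (Adjunction.ofIsRightAdjoint G)⟩
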